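/- There is no injective group homomorphism from (ZMod 2)³ into the special orthogonal group SO(3, ℝ) of real 3×3 orthogonal matrices of determinant 1; equivalently, SO(3, ℝ) contains no subgroup isomorphic to (ZMod 2)³. -/

import Mathlib

open Matrix Finset

/-- Trace of the adjugate of a `3 × 3` matrix. -/
private lemma trace_adjugate_fin_three (A : Matrix (Fin 3) (Fin 3) ℝ) :
    2 * (adjugate A).trace = A.trace ^ 2 - (A * A).trace := by
  simp [Matrix.adjugate_fin_three, Matrix.trace_fin_three, Matrix.mul_apply,
    Fin.sum_univ_three]
  ring

/-- An orthogonal involution is symmetric. -/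
private lemma symm_of_invol (A : Matrix (Fin 3) (Fin 3) ℝ)
    (h1 : star A * A = 1) (h2 : A * A = 1) : ∀ i j, A i j = A j i := by
  have hA : star A = A := by
    calc star A = star A * (A * A) := by rw [h2, mul_one]
    _ = (star A * A) * A := by rw [mul_assoc]
    _ = A := by rw [h1, one_mul]
  intro i j
  have := congrFun (congrFun hA j) i
  simpa [Matrix.star_eq_conjTranspose, Matrix.conjTranspose_apply] using this

/-- A nontrivial involution in SO(3) has trace `-1`. -/
private lemma trace_invol (A : Matrix (Fin 3) (Fin 3) ℝ)
    (h1 : star A * A = 1) (h2 : A * A = 1) (h3 : A.det = 1) (hne : A ≠ 1) :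
    A.trace = -1 := by
  have hadj : adjugate A = A := by
    have h4 : A * adjugate A = 1 := by rw [Matrix.mul_adjugate, h3, one_smul]
    calc adjugate A = (A * A) * adjugate A := by rw [h2, one_mul]
    _ = A * (A * adjugate A) := by rw [mul_assoc]
    _ = A := by rw [h4, mul_one]
  have htr : 2 * A.trace = A.trace ^ 2 - 3 := by
    have := trace_adjugate_fin_three A
    rw [hadj, h2] at this
    simpa [Matrix.trace_fin_three, Matrix.one_apply] using this
  have hcase : A.trace = 3 ∨ A.trace = -1 := by
    have : (A.trace - 3) * (A.trace + 1) = 0 := by nlinarith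
    rcases mul_eq_zero.1 this with h | h
    · left; linarith
    · right; linarith
  rcases hcase with h | h
  · -- trace 3 forces A = 1, contradiction
    exfalso
    have hsym := symm_of_invol A h1 h2
    have hrow : ∀ i : Fin 3, (A i 0) ^ 2 + (A i 1) ^ 2 + (A i 2) ^ 2 = 1 := by
      intro i
      have := congrFun (congrFun h2 i) i
      simp only [Matrix.mul_apply, Fin.sum_univ_three, Matrix.one_apply_eq] at this
      rw [← hsym i 0, ← hsym i 1, ← hsym i 2] at this
      nlinarith [this]
    have htr3 : A 0 0 + A 1 1 + A 2 2 = 3 := by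
      simpa [Matrix.trace_fin_three] using h
    have h00 : A 0 0 = 1 := by nlinarith [hrow 0, hrow 1, hrow 2, sq_nonneg (A 0 0 - 1), sq_nonneg (A 1 1 - 1), sq_nonneg (A 2 2 - 1), sq_nonneg (A 0 1), sq_nonneg (A 0 2), sq_nonneg (A 1 0), sq_nonneg (A 1 2), sq_nonneg (A 2 0), sq_nonneg (A 2 1)]
    have h11 : A 1 1 = 1 := by nlinarith [hrow 0, hrow 1, hrow 2, sq_nonneg (A 0 0 - 1), sq_nonneg (A 1 1 - 1), sq_nonneg (A 2 2 - 1), sq_nonneg (A 0 1), sq_nonneg (A 0 2), sq_nonneg (A 1 0), sq_nonneg (A 1 2), sq_nonneg (A 2 0), sq_nonneg (A 2 1)]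
    have h22 : A 2 2 = 1 := by linarith
    have h01 : A 0 1 = 0 := by nlinarith [hrow 0, sq_nonneg (A 0 1), sq_nonneg (A 0 2)]
    have h02 : A 0 2 = 0 := by nlinarith [hrow 0, sq_nonneg (A 0 1), sq_nonneg (A 0 2)]
    have h12 : A 1 2 = 0 := by nlinarith [hrow 1, sq_nonneg (A 1 0), sq_nonneg (A 1 2)]
    have h10 : A 1 0 = 0 := by rw [hsym]; exact h01
    have h20 : A 2 0 = 0 := by rw [hsym]; exact h02
    have h21 : A 2 1 = 0 := by rw [hsym]; exact h12
    apply hne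
    ext i j
    fin_cases i <;> fin_cases j <;>
      simp only [Matrix.one_apply, Fin.isValue] <;> norm_num <;> assumption
  · exact h

theorem no_injective_hom_zmod2_pow_three_to_SO3 :
    ¬ ∃ f : Multiplicative (Fin 3 → ZMod 2) →*
        Matrix.specialOrthogonalGroup (Fin 3) ℝ,
      Function.Injective f := by
  rintro ⟨f, hf⟩
  set G := Multiplicative (Fin 3 → ZMod 2)
  have hG2 : ∀ x : G, x * x = 1 := by
    intro x
    have : Multiplicative.toAdd x + Multiplicative.toAdd x = 0 := by
      funext i; exact CharTwo.add_self_eq_zero _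
    exact congrArg Multiplicative.ofAdd this
  set M : G → Matrix (Fin 3) (Fin 3) ℝ := fun x => (f x : Matrix (Fin 3) (Fin 3) ℝ) with hM
  have hMone : M 1 = 1 := by simp [hM]
  have hMmul : ∀ x y : G, M x * M y = M (x * y) := by
    intro x y; simp [hM]
  have horth : ∀ x : G, star (M x) * M x = 1 := fun x => (f x).2.1.1
  have hdet : ∀ x : G, (M x).det = 1 := fun x => (f x).2.2
  have hinv : ∀ x : G, M x * M x = 1 := by
    intro x; rw [hMmul, hG2, hMone]
  have hMne : ∀ x : G, x ≠ 1 → M x ≠ 1 := by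
    intro x hx h
    exact hx (hf (Subtype.ext (h.trans hMone.symm)))
  -- sum of all matrices
  set S : Matrix (Fin 3) (Fin 3) ℝ := ∑ x : G, M x with hS
  have hSsym : ∀ i j, S i j = S j i := by
    intro i j
    simp only [hS, Matrix.sum_apply]
    exact Finset.sum_congr rfl fun x _ => symm_of_invol _ (horth x) (hinv x) i j
  have htraceS : S.trace = -4 := by
    rw [hS, Matrix.trace_sum]
    rw [← Finset.add_sum_erase _ _ (Finset.mem_univ (1 : G))]
    rw [Finset.sum_congr rfl (fun x hx => trace_invol (M x) (horth x) (hinv x)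
      (hdet x) (hMne x (Finset.ne_of_mem_erase hx)))]
    rw [Finset.sum_const, Finset.card_erase_of_mem (Finset.mem_univ _)]
    have hcard : Fintype.card G = 8 := rfl
    rw [hMone]
    simp [Finset.card_univ, hcard, Matrix.trace_one]
    norm_num
  have hSS : S * S = (8 : ℕ) • S := by
    rw [hS, Finset.sum_mul_sum]
    have : ∀ x : G, ∑ y : G, M x * M y = S := by
      intro x
      rw [hS]
      refine Fintype.sum_equiv (Equiv.mulLeft x) _ _ fun y => ?_
      simp [hMmul]
    rw [Finset.sum_congr rfl fun x _ => this x, Finset.sum_const, Finset.card_univ]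
    rfl
  have htrSS : (S * S).trace = -32 := by
    rw [hSS, Matrix.trace_smul, htraceS]
    norm_num
  have hnonneg : 0 ≤ (S * S).trace := by
    rw [Matrix.trace]
    apply Finset.sum_nonneg
    intro i _
    rw [Matrix.diag_apply, Matrix.mul_apply]
    apply Finset.sum_nonneg
    intro k _
    rw [hSsym k i]
    exact mul_self_nonneg _
  linarith
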